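/- arXiv:1706.09423 — 7 statements merged into one kernel-verified Lean document; each statement's English description precedes it below -/
import Mathlib

section
/- Every d×d real symmetric matrix A that is entrywise nonnegative and diagonally dominant (A_{ii} ≥ Σ_{j≠i} A_{ij} for all i) is completely positive. -/
open Matrix

/-- A `d × d` real matrix is completely positive if `A = B * Bᵀ` for some
entrywise nonnegative `d × k` matrix `B` with `k ≥ 1`. -/
def IsCompletelyPositive {d : ℕ} (A : Matrix (Fin d) (Fin d) ℝ) : Prop :=
  ∃ (k : ℕ), 1 ≤ k ∧ ∃ B : Matrix (Fin d) (Fin k) ℝ,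
    (∀ i j, 0 ≤ B i j) ∧ A = B * Bᵀ

theorem diagonally_dominant_nonneg_is_cp {d : ℕ} (A : Matrix (Fin d) (Fin d) ℝ)
    (hsymm : A.IsSymm) (hnonneg : ∀ i j, 0 ≤ A i j)
    (hdd : ∀ i, ∑ j ∈ Finset.univ.erase i, A i j ≤ A i i) :
    IsCompletelyPositive A := by
  classical
  have hsym : ∀ p q, A q p = A p q := fun p q => by
    have := congrFun (congrFun hsymm p) q
    simpa [Matrix.transpose_apply] using this
  set S : Fin d → ℝ := fun i => ∑ j ∈ Finset.univ.erase i, A i j with hS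
  set D : Fin d → ℝ := fun i => Real.sqrt (A i i - S i) with hD
  set c : Fin d → Fin d → ℝ := fun p q => Real.sqrt (A p q / 2) with hc
  set f : Fin d → Fin d → Fin d → ℝ := fun i p q =>
    if p = q then (if i = p then D p else 0)
    else c p q * ((if i = p then (1:ℝ) else 0) + (if i = q then (1:ℝ) else 0)) with hf
  have hfnonneg : ∀ i p q, 0 ≤ f i p q := by
    intro i p q
    simp only [hf]
    split_ifs <;> positivity
  have hDsq : ∀ p, D p * D p = A p p - S p := by
    intro p
    exact Real.mul_self_sqrt (by linarith [hdd p])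
  have hcsq : ∀ p q, c p q * c p q = A p q / 2 := by
    intro p q
    exact Real.mul_self_sqrt (by linarith [hnonneg p q])
  have key : ∀ i j, ∑ p, ∑ q, f i p q * f j p q = A i j := by
    intro i j
    have hsplit : ∀ p : Fin d, ∑ q, f i p q * f j p q
        = f i p p * f j p p + ∑ q ∈ Finset.univ.erase p, f i p q * f j p q := by
      intro p
      exact (Finset.add_sum_erase _ _ (Finset.mem_univ p)).symm
    simp_rw [hsplit]
    rw [Finset.sum_add_distrib]
    -- first sum : diagonal columns
    have h1 : ∑ p, f i p p * f j p p = if i = j then A i i - S i else 0 := by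
      by_cases hij : i = j
      · subst hij
        rw [if_pos rfl]
        have hterm : ∀ p, f i p p * f i p p = if i = p then D p * D p else 0 := by
          intro p
          simp only [hf, if_pos rfl]
          by_cases h : i = p <;> simp [h]
        rw [Finset.sum_congr rfl (fun p _ => hterm p),
          Finset.sum_ite_eq Finset.univ i (fun p => D p * D p), if_pos (Finset.mem_univ i),
          hDsq]
      · rw [if_neg hij, Finset.sum_eq_zero]
        intro p _
        simp only [hf, if_pos rfl]
        by_cases h1 : i = p <;> by_cases h2 : j = p
        · exact absurd (h1.trans h2.symm) hij
        · simp [h2]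
        · simp [h1]
        · simp [h1]
    rw [h1]
    -- second sum : off-diagonal columns
    by_cases hij : i = j
    · subst hij
      have h2 : ∀ p : Fin d, ∑ q ∈ Finset.univ.erase p, f i p q * f i p q
          = if p = i then S i / 2 else A p i / 2 := by
        intro p
        by_cases hpi : p = i
        · rw [if_pos hpi]
          have hcong : ∀ q ∈ Finset.univ.erase p, f i p q * f i p q = A p q / 2 := by
            intro q hq
            have hq' : ¬ p = q := fun h => (Finset.mem_erase.mp hq).1 h.symm
            have e1 : f i p q = c p q := by
              simp [hf, hq', hpi.symm]
            rw [e1, hcsq]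
          rw [Finset.sum_congr rfl hcong]
          simp only [hS]
          rw [hpi, Finset.sum_div]
        · rw [if_neg hpi]
          have hip : ¬ i = p := fun h => hpi h.symm
          have hcong : ∀ q ∈ Finset.univ.erase p, f i p q * f i p q
              = if i = q then A p q / 2 else 0 := by
            intro q hq
            have hq' : ¬ p = q := fun h => (Finset.mem_erase.mp hq).1 h.symm
            have e1 : f i p q = if i = q then c p q else 0 := by
              by_cases hiq : i = q <;> simp [hf, hq', Ne.symm hq', hip, hiq]
            rw [e1]
            by_cases hiq : i = q <;> simp [hiq, hcsq]
          rw [Finset.sum_congr rfl hcong,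
            Finset.sum_ite_eq (Finset.univ.erase p) i (fun q => A p q / 2),
            if_pos (Finset.mem_erase.mpr ⟨hip, Finset.mem_univ i⟩)]
      rw [Finset.sum_congr rfl (fun p _ => h2 p)]
      rw [← Finset.add_sum_erase _ _ (Finset.mem_univ i)]
      have h4 : ∑ p ∈ Finset.univ.erase i,
          (if p = i then S i / 2 else A p i / 2) = S i / 2 := by
        rw [Finset.sum_congr rfl
          (fun p hp => if_neg (Finset.mem_erase.mp hp).1)]
        have : ∑ p ∈ Finset.univ.erase i, A p i / 2
            = ∑ p ∈ Finset.univ.erase i, A i p / 2 :=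
          Finset.sum_congr rfl (fun p _ => by rw [hsym i p])
        rw [this]
        simp only [hS]
        rw [Finset.sum_div]
      rw [h4]
      simp only [eq_self_iff_true, if_true]
      ring
    · rw [if_neg hij]
      have h2 : ∀ p : Fin d, ∑ q ∈ Finset.univ.erase p, f i p q * f j p q
          = if p = i then A i j / 2 else if p = j then A j i / 2 else 0 := by
        intro p
        by_cases hpi : p = i
        · rw [if_pos hpi]
          have hjp : ¬ j = p := fun h => hij ((h.trans hpi).symm)
          have hcong : ∀ q ∈ Finset.univ.erase p, f i p q * f j p q
              = if j = q then A p q / 2 else 0 := by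
            intro q hq
            have hq' : ¬ p = q := fun h => (Finset.mem_erase.mp hq).1 h.symm
            have e1 : f i p q = c p q := by simp [hf, hq', hpi.symm]
            have e2 : f j p q = if j = q then c p q else 0 := by
              by_cases hjq : j = q <;> simp [hf, hq', Ne.symm hq', hjp, hjq]
            rw [e1, e2]
            by_cases hjq : j = q <;> simp [hjq, hcsq, mul_comm]
          rw [Finset.sum_congr rfl hcong,
            Finset.sum_ite_eq (Finset.univ.erase p) j (fun q => A p q / 2),
            if_pos (Finset.mem_erase.mpr ⟨hjp, Finset.mem_univ j⟩), hpi]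
        · rw [if_neg hpi]
          have hip : ¬ i = p := fun h => hpi h.symm
          by_cases hpj : p = j
          · rw [if_pos hpj]
            have hcong : ∀ q ∈ Finset.univ.erase p, f i p q * f j p q
                = if i = q then A p q / 2 else 0 := by
              intro q hq
              have hq' : ¬ p = q := fun h => (Finset.mem_erase.mp hq).1 h.symm
              have e1 : f i p q = if i = q then c p q else 0 := by
                by_cases hiq : i = q <;> simp [hf, hq', Ne.symm hq', hip, hiq]
              have e2 : f j p q = c p q := by simp [hf, hq', hpj.symm]
              rw [e1, e2]
              by_cases hiq : i = q <;> simp [hiq, hcsq]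
            rw [Finset.sum_congr rfl hcong,
              Finset.sum_ite_eq (Finset.univ.erase p) i (fun q => A p q / 2),
              if_pos (Finset.mem_erase.mpr ⟨hip, Finset.mem_univ i⟩), hpj]
          · rw [if_neg hpj, Finset.sum_eq_zero]
            intro q hq
            have hq' : ¬ p = q := fun h => (Finset.mem_erase.mp hq).1 h.symm
            have hjp : ¬ j = p := fun h => hpj h.symm
            by_cases hiq : i = q
            · have hjq : ¬ j = q := fun h => hij (hiq.trans h.symm)
              simp [hf, hq', hip, hjp, hiq, hjq]
            · simp [hf, hq', hip, hiq]
      rw [Finset.sum_congr rfl (fun p _ => h2 p)]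
      have hexp : ∀ p : Fin d,
          (if p = i then A i j / 2 else if p = j then A j i / 2 else 0)
          = (if p = i then A i j / 2 else 0) + (if p = j then A j i / 2 else 0) := by
        intro p
        by_cases hpi : p = i
        · rw [if_pos hpi, if_pos hpi,
            if_neg (fun h : p = j => hij (hpi.symm.trans h)), add_zero]
        · rw [if_neg hpi, if_neg hpi, zero_add]
      rw [Finset.sum_congr rfl (fun p _ => hexp p), Finset.sum_add_distrib,
        Finset.sum_ite_eq' Finset.univ i (fun _ => A i j / 2),
        Finset.sum_ite_eq' Finset.univ j (fun _ => A j i / 2),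
        if_pos (Finset.mem_univ i), if_pos (Finset.mem_univ j), hsym i j]
      ring
  -- now build B
  refine ⟨d * d + 1, Nat.succ_le_succ (Nat.zero_le _), ?_⟩
  set B : Matrix (Fin d) (Fin (d * d + 1)) ℝ := fun i cc =>
    if h : (cc : ℕ) < d * d then
      f i (finProdFinEquiv.symm ⟨(cc : ℕ), h⟩).1 (finProdFinEquiv.symm ⟨(cc : ℕ), h⟩).2
    else 0 with hB
  refine ⟨B, ?_, ?_⟩
  · intro i cc
    simp only [hB]
    split_ifs
    · exact hfnonneg _ _ _
    · exact le_refl 0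
  · ext i j
    rw [Matrix.mul_apply]
    simp only [Matrix.transpose_apply]
    rw [← key i j]
    rw [Fin.sum_univ_castSucc]
    have hlast : B i (Fin.last (d * d)) * B j (Fin.last (d * d)) = 0 := by
      simp [hB, Fin.val_last]
    rw [hlast, add_zero]
    have hcast : ∀ cc : Fin (d * d),
        B i cc.castSucc * B j cc.castSucc
        = f i (finProdFinEquiv.symm cc).1 (finProdFinEquiv.symm cc).2
          * f j (finProdFinEquiv.symm cc).1 (finProdFinEquiv.symm cc).2 := by
      intro cc
      have h : ((cc.castSucc : Fin (d * d + 1)) : ℕ) < d * d := by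
        simp [Fin.coe_castSucc, cc.isLt]
      simp only [hB, dif_pos h]
      congr 2 <;> · congr 1; exact Fin.ext (by simp)
    rw [Finset.sum_congr rfl (fun cc _ => hcast cc)]
    rw [Equiv.sum_comp (finProdFinEquiv.symm)
      (fun pq : Fin d × Fin d => f i pq.1 pq.2 * f j pq.1 pq.2)]
    rw [Fintype.sum_prod_type]
end

section
/- Every 3×3 real symmetric doubly nonnegative matrix is completely positive. -/
open Matrix
set_option maxHeartbeats 1600000

lemma quad3 (A : Matrix (Fin 3) (Fin 3) ℝ) (hpsd : A.PosSemidef) (x y z : ℝ) :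
    0 ≤ A 0 0 * x^2 + A 1 1 * y^2 + A 2 2 * z^2 + (A 0 1 + A 1 0)*x*y
      + (A 0 2 + A 2 0)*x*z + (A 1 2 + A 2 1)*y*z := by
  have h := hpsd.dotProduct_mulVec_nonneg ![x, y, z]
  simp [dotProduct, Matrix.mulVec, Fin.sum_univ_three] at h
  linarith [h]

lemma keyMain (A : Matrix (Fin 3) (Fin 3) ℝ)
    (hsymm : A.IsSymm) (hpsd : A.PosSemidef) (hnonneg : ∀ i j, 0 ≤ A i j)
    (hpos : 0 < A 0 0) (hcond : A 0 1 * A 0 2 ≤ A 0 0 * A 1 2) :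
    ∃ B : Matrix (Fin 3) (Fin 3) ℝ, (∀ i j, 0 ≤ B i j) ∧ A = B * Bᵀ := by
  set a := A 0 0 with ha'
  set b := A 0 1 with hb'
  set c := A 0 2 with hc'
  set d := A 1 1 with hd'
  set e := A 1 2 with he'
  set f := A 2 2 with hf'
  have h10 : A 1 0 = b := by simpa using congrFun (congrFun hsymm 0) 1
  have h20 : A 2 0 = c := by simpa using congrFun (congrFun hsymm 0) 2
  have h21 : A 2 1 = e := by simpa using congrFun (congrFun hsymm 1) 2
  have hb0 : 0 ≤ b := hnonneg 0 1
  have hc0 : 0 ≤ c := hnonneg 0 2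
  have he0 : 0 ≤ e := hnonneg 1 2
  have quad : ∀ x y z : ℝ, 0 ≤ a*x^2 + d*y^2 + f*z^2 + 2*b*x*y + 2*c*x*z + 2*e*y*z := by
    intro x y z
    have := quad3 A hpsd x y z
    rw [h10, h20, h21] at this
    linarith
  clear_value a b c d e f
  have hb2 : b^2 ≤ a * d := by nlinarith [quad b (-a) 0, hpos]
  have hc2 : c^2 ≤ a * f := by nlinarith [quad c 0 (-a), hpos]
  -- if the (1,1) Schur pivot vanishes, so does the off-diagonal
  have haeq : b^2 = a*d → a*e = b*c := by
    intro heq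
    have hkey : ∀ t : ℝ, 0 ≤ (a*d - b^2)*t^2 + 2*(a*e - b*c)*t + (a*f - c^2) := by
      intro t
      have h2 : 0 ≤ a * ((a*d - b^2)*t^2 + 2*(a*e - b*c)*t + (a*f - c^2)) := by
        have hQ := quad (-(b*t+c)) (a*t) a
        have hid : a * ((a*d - b^2)*t^2 + 2*(a*e - b*c)*t + (a*f - c^2))
            = a*(-(b*t+c))^2 + d*(a*t)^2 + f*a^2 + 2*b*(-(b*t+c))*(a*t)
              + 2*c*(-(b*t+c))*a + 2*e*(a*t)*a := by ring
        rw [hid]; exact hQ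
      nlinarith [hpos]
    by_contra hne
    have hne' : a*e - b*c ≠ 0 := fun h => hne (by linarith)
    have h3 := hkey (-(((a*f - c^2) + (a*e - b*c)^2)/(2*(a*e - b*c))))
    rw [← heq] at h3
    have h4 : (2*(a*e-b*c)) ≠ 0 := by intro h; apply hne'; linarith
    field_simp at h3
    have h5 : 0 < (a*e - b*c)^2 :=
      lt_of_le_of_ne (sq_nonneg _) (Ne.symm (pow_ne_zero 2 hne'))
    rw [le_div_iff₀ h5] at h3; nlinarith [mul_pos h5 h5]
  -- Schur complement determinant inequality
  have hepp : (a*e - b*c)^2 ≤ (a*d - b^2) * (a*f - c^2) := by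
    rcases lt_or_eq_of_le hb2 with hlt | heq
    · have h1 : 0 ≤ a * (a*d - b^2) * ((a*d - b^2)*(a*f - c^2) - (a*e - b*c)^2) := by
        nlinarith [quad (b*(a*e-b*c) - c*(a*d-b^2)) (-(a*(a*e-b*c))) (a*(a*d-b^2))]
      nlinarith [mul_pos hpos (sub_pos.mpr hlt)]
    · have hz := haeq heq
      rw [← heq]
      have : a*e - b*c = 0 := by linarith
      rw [this]
      nlinarith [hc2]
  have ha0 : a ≠ 0 := ne_of_gt hpos
  set s := Real.sqrt a with hs'
  have hs : s * s = a := Real.mul_self_sqrt hpos.le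
  have hs0 : 0 < s := Real.sqrt_pos.mpr hpos
  rcases lt_or_eq_of_le hb2 with hlt | heq
  · -- nondegenerate pivot
    set u := d - b^2/a with hu'
    have hu : 0 < u := by rw [hu', sub_pos, div_lt_iff₀ hpos]; nlinarith
    set t := Real.sqrt u with ht'
    have ht : t * t = u := Real.mul_self_sqrt hu.le
    have ht0 : 0 < t := Real.sqrt_pos.mpr hu
    set w := e - b*c/a with hw'
    have hw : 0 ≤ w := by rw [hw', sub_nonneg, div_le_iff₀ hpos]; linarith
    clear_value u t w
    set v := f - c^2/a - (w/t)^2 with hv'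
    have hv : 0 ≤ v := by
      have h1 : (w/t)^2 = w^2/u := by rw [div_pow, sq t, ht]
      have h2 : w^2 * a^2 = (a*e - b*c)^2 := by rw [hw']; field_simp
      have h3 : ((f - c^2/a) * u) * a^2 = (a*f - c^2)*(a*d - b^2) := by
        rw [hu']; field_simp
      have ha2 : (0:ℝ) < a^2 := by positivity
      have h4 : w^2 ≤ (f - c^2/a) * u := by
        have h6 : w^2 * a^2 ≤ ((f - c^2/a)*u) * a^2 := by linarith [hepp, h2, h3]
        exact le_of_mul_le_mul_right h6 ha2
      have h5 : w^2/u ≤ f - c^2/a := by rw [div_le_iff₀ hu]; linarith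
      rw [hv', h1]; linarith
    clear_value v
    have hr : Real.sqrt v * Real.sqrt v = v := Real.mul_self_sqrt hv
    refine ⟨Matrix.of ![![s,0,0], ![b/s, t, 0], ![c/s, w/t, Real.sqrt v]], ?_, ?_⟩
    · intro i j
      fin_cases i <;> fin_cases j <;>
        simp [Matrix.vecHead, Matrix.vecTail] <;> positivity
    · ext i j
      fin_cases i <;> fin_cases j <;>
        simp [Matrix.mul_apply, Fin.sum_univ_three, Matrix.transpose_apply,
          Matrix.vecHead, Matrix.vecTail, h10, h20, h21, ← ha', ← hb', ← hc', ← hd',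
          ← he', ← hf']
      · exact hs.symm
      · field_simp
      · field_simp
      · field_simp
      · rw [ht, hu', div_mul_div_comm, hs]; field_simp; ring
      · rw [mul_comm t (w/t), div_mul_cancel₀ w ht0.ne', hw', div_mul_div_comm, hs]; ring
      · field_simp
      · rw [div_mul_cancel₀ w ht0.ne', hw', div_mul_div_comm, hs]; ring
      · rw [hr, hv', div_mul_div_comm, hs]; ring
  · have hae := haeq heq
    have hv2 : 0 ≤ f - c^2/a := by
      rw [sub_nonneg, div_le_iff₀ hpos]; nlinarith [hc2]
    have hr2 : Real.sqrt (f - c^2/a) * Real.sqrt (f - c^2/a) = f - c^2/a :=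
      Real.mul_self_sqrt hv2
    refine ⟨Matrix.of ![![s,0,0], ![b/s, 0, 0], ![c/s, 0, Real.sqrt (f - c^2/a)]], ?_, ?_⟩
    · intro i j; fin_cases i <;> fin_cases j <;>
        simp [Matrix.vecHead, Matrix.vecTail] <;> positivity
    · ext i j
      fin_cases i <;> fin_cases j <;>
        simp [Matrix.mul_apply, Fin.sum_univ_three, Matrix.transpose_apply,
          Matrix.vecHead, Matrix.vecTail, h10, h20, h21, ← ha', ← hb', ← hc', ← hd',
          ← he', ← hf']
      · exact hs.symm
      · field_simp
      · field_simp
      · field_simp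
      · rw [div_mul_div_comm, hs]; field_simp; linarith [heq]
      · rw [div_mul_div_comm, hs]; field_simp; linarith [hae]
      · field_simp
      · rw [div_mul_div_comm, hs]; field_simp; linarith [hae]
      · rw [hr2, div_mul_div_comm, hs]; ring


lemma keyZero (A : Matrix (Fin 3) (Fin 3) ℝ)
    (hsymm : A.IsSymm) (hpsd : A.PosSemidef) (hnonneg : ∀ i j, 0 ≤ A i j)
    (hzero : A 0 0 = 0) :
    ∃ B : Matrix (Fin 3) (Fin 3) ℝ, (∀ i j, 0 ≤ B i j) ∧ A = B * Bᵀ := by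
  set a := A 0 0 with ha'
  set b := A 0 1 with hb'
  set c := A 0 2 with hc'
  set d := A 1 1 with hd'
  set e := A 1 2 with he'
  set f := A 2 2 with hf'
  have h10 : A 1 0 = b := by simpa using congrFun (congrFun hsymm 0) 1
  have h20 : A 2 0 = c := by simpa using congrFun (congrFun hsymm 0) 2
  have h21 : A 2 1 = e := by simpa using congrFun (congrFun hsymm 1) 2
  have hb0 : 0 ≤ b := hnonneg 0 1
  have hc0 : 0 ≤ c := hnonneg 0 2
  have he0 : 0 ≤ e := hnonneg 1 2
  have ha0 : a = 0 := hzero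
  have quad : ∀ x y z : ℝ, 0 ≤ a*x^2 + d*y^2 + f*z^2 + 2*b*x*y + 2*c*x*z + 2*e*y*z := by
    intro x y z
    have := quad3 A hpsd x y z
    rw [h10, h20, h21] at this
    linarith
  clear_value a b c d e f
  have hd0 : 0 ≤ d := by nlinarith [quad 0 1 0]
  have hf0 : 0 ≤ f := by nlinarith [quad 0 0 1]
  have hb : b = 0 := by
    rcases hb0.eq_or_lt with h | h
    · exact h.symm
    · exfalso
      have hq := quad (-(d+1)/(2*b)) 1 0
      rw [ha0] at hq
      have h2b : (2*b) ≠ 0 := by positivity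
      field_simp at hq
      nlinarith [hq]
  have hc : c = 0 := by
    rcases hc0.eq_or_lt with h | h
    · exact h.symm
    · exfalso
      have hq := quad (-(f+1)/(2*c)) 0 1
      rw [ha0] at hq
      have h2c : (2*c) ≠ 0 := by positivity
      field_simp at hq
      nlinarith [hq]
  rcases hd0.eq_or_lt with hd | hd
  · -- d = 0 : also e = 0
    have he : e = 0 := by
      rcases he0.eq_or_lt with h | h
      · exact h.symm
      · exfalso
        have hq := quad 0 (-(f+1)/(2*e)) 1
        rw [← hd] at hq
        have h2e : (2*e) ≠ 0 := by positivity
        field_simp at hq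
        nlinarith [hq]
    refine ⟨Matrix.of ![![0,0,0], ![0,0,0], ![0,0,Real.sqrt f]], ?_, ?_⟩
    · intro i j
      fin_cases i <;> fin_cases j <;>
        simp [Matrix.vecHead, Matrix.vecTail] <;> positivity
    · ext i j
      fin_cases i <;> fin_cases j <;>
        simp [Matrix.mul_apply, Fin.sum_univ_three, Matrix.transpose_apply,
          Matrix.vecHead, Matrix.vecTail, h10, h20, h21, ← ha', ← hb', ← hc', ← hd',
          ← he', ← hf'] <;>
      simp [ha0, hb, hc, ← hd, he, Real.mul_self_sqrt hf0]
  · -- 0 < d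
    have hdf : e^2 ≤ d * f := by nlinarith [quad 0 e (-d)]
    have hsd : Real.sqrt d * Real.sqrt d = d := Real.mul_self_sqrt hd.le
    have hsd0 : 0 < Real.sqrt d := Real.sqrt_pos.mpr hd
    have hv : 0 ≤ f - e^2/d := by
      rw [sub_nonneg, div_le_iff₀ hd]; nlinarith
    have hrv : Real.sqrt (f - e^2/d) * Real.sqrt (f - e^2/d) = f - e^2/d :=
      Real.mul_self_sqrt hv
    refine ⟨Matrix.of ![![0,0,0], ![Real.sqrt d, 0, 0],
        ![e/Real.sqrt d, Real.sqrt (f - e^2/d), 0]], ?_, ?_⟩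
    · intro i j
      fin_cases i <;> fin_cases j <;>
        simp [Matrix.vecHead, Matrix.vecTail] <;> positivity
    · ext i j
      fin_cases i <;> fin_cases j <;>
        simp [Matrix.mul_apply, Fin.sum_univ_three, Matrix.transpose_apply,
          Matrix.vecHead, Matrix.vecTail, h10, h20, h21, ← ha', ← hb', ← hc', ← hd',
          ← he', ← hf']
      · exact ha0
      · exact hb
      · exact hc
      · exact hb
      · exact hsd.symm
      · rw [mul_comm, div_mul_cancel₀ e hsd0.ne']
      · exact hc
      · rw [div_mul_cancel₀ e hsd0.ne']
      · rw [hrv, div_mul_div_comm, hsd]; field_simp; ring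

lemma subCP (A : Matrix (Fin 3) (Fin 3) ℝ) (σ : Equiv.Perm (Fin 3))
    (h : ∃ B : Matrix (Fin 3) (Fin 3) ℝ, (∀ i j, 0 ≤ B i j) ∧
      A.submatrix σ σ = B * Bᵀ) :
    ∃ C : Matrix (Fin 3) (Fin 3) ℝ, (∀ i j, 0 ≤ C i j) ∧ A = C * Cᵀ := by
  obtain ⟨B, hB, hfac⟩ := h
  refine ⟨B.submatrix σ.symm id, fun i j => hB _ _, ?_⟩
  have h1 : A = (A.submatrix σ σ).submatrix σ.symm σ.symm := by
    ext i j; simp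
  rw [h1, hfac]
  ext i j
  simp [Matrix.mul_apply, Matrix.submatrix_apply]

lemma symm_sub (A : Matrix (Fin 3) (Fin 3) ℝ) (hsymm : A.IsSymm)
    (σ : Equiv.Perm (Fin 3)) : (A.submatrix σ σ).IsSymm := by
  ext i j
  have := congrFun (congrFun hsymm (σ i)) (σ j)
  simpa using this

theorem dnn3_is_cp (A : Matrix (Fin 3) (Fin 3) ℝ)
    (hsymm : A.IsSymm) (hpsd : A.PosSemidef) (hnonneg : ∀ i j, 0 ≤ A i j) :
    IsCompletelyPositive A := by
  have main : ∃ B : Matrix (Fin 3) (Fin 3) ℝ, (∀ i j, 0 ≤ B i j) ∧ A = B * Bᵀ := by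
    by_cases h0 : A 0 0 = 0
    · exact keyZero A hsymm hpsd hnonneg h0
    by_cases h1 : A 1 1 = 0
    · refine subCP A (Equiv.swap 0 1) (keyZero _ (symm_sub A hsymm _)
        (hpsd.submatrix _) (fun i j => hnonneg _ _) ?_)
      simp [h1]
    by_cases h2 : A 2 2 = 0
    · refine subCP A (Equiv.swap 0 2) (keyZero _ (symm_sub A hsymm _)
        (hpsd.submatrix _) (fun i j => hnonneg _ _) ?_)
      simp [h2]
    -- all diagonal entries positive
    have hd0 : ∀ i, 0 < A i i := by
      intro i
      fin_cases i
      · exact lt_of_le_of_ne (hnonneg 0 0) (Ne.symm h0)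
      · exact lt_of_le_of_ne (hnonneg 1 1) (Ne.symm h1)
      · exact lt_of_le_of_ne (hnonneg 2 2) (Ne.symm h2)
    have h10 : A 1 0 = A 0 1 := by simpa using congrFun (congrFun hsymm 0) 1
    have h20 : A 2 0 = A 0 2 := by simpa using congrFun (congrFun hsymm 0) 2
    have h21 : A 2 1 = A 1 2 := by simpa using congrFun (congrFun hsymm 1) 2
    by_cases hc1 : A 0 1 * A 0 2 ≤ A 0 0 * A 1 2
    · exact keyMain A hsymm hpsd hnonneg (hd0 0) hc1
    by_cases hc2 : A 0 1 * A 1 2 ≤ A 1 1 * A 0 2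
    · refine subCP A (Equiv.swap 0 1) (keyMain _ (symm_sub A hsymm _)
        (hpsd.submatrix _) (fun i j => hnonneg _ _) ?_ ?_)
      · simpa using hd0 1
      · have hsw : (Equiv.swap (0:Fin 3) 1) 2 = 2 := by decide
        simpa [h10, hsw] using hc2
    · -- third pivot must work
      have hc3 : A 1 2 * A 0 2 ≤ A 2 2 * A 0 1 := by
        push_neg at hc1 hc2
        have hb2 : (A 0 1)^2 ≤ A 0 0 * A 1 1 := by
          have hq := quad3 A hpsd (A 0 1) (-(A 0 0)) 0
          rw [h10, h20, h21] at hq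
          nlinarith [hd0 0]
        rcases eq_or_lt_of_le (hnonneg 0 2) with hcz | hcz
        · exfalso; rw [← hcz, mul_zero] at hc1
          nlinarith [mul_nonneg (hd0 0).le (hnonneg 1 2)]
        rcases eq_or_lt_of_le (hnonneg 1 2) with hez | hez
        · exfalso; rw [← hez, mul_zero] at hc2
          nlinarith [mul_nonneg (hd0 1).le hcz.le]
        by_contra hcon
        push_neg at hcon
        have hprod : (A 0 0 * A 1 2) * (A 1 1 * A 0 2) < (A 0 1 * A 0 2) * (A 0 1 * A 1 2) :=
          mul_lt_mul'' hc1 hc2 (mul_nonneg (hd0 0).le hez.le)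
            (mul_nonneg (hd0 1).le hcz.le)
        nlinarith [mul_le_mul_of_nonneg_right hb2 (mul_pos hcz hez).le]
      refine subCP A (Equiv.swap 0 2) (keyMain _ (symm_sub A hsymm _)
        (hpsd.submatrix _) (fun i j => hnonneg _ _) ?_ ?_)
      · simpa using hd0 2
      · have hsw : (Equiv.swap (0:Fin 3) 2) 1 = 1 := by decide
        simpa [hsw, h20, h21, h10] using hc3
  obtain ⟨B, hB, hfac⟩ := main
  exact ⟨3, by norm_num, B, hB, hfac⟩
end

section
/- Let A be a d×d doubly nonnegative matrix of rank at most 2. Then A is completely positive. -/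
open Matrix



lemma exists_factor_two {d : ℕ} (A : Matrix (Fin d) (Fin d) ℝ)
    (hpsd : A.PosSemidef) (hrank : A.rank ≤ 2) :
    ∃ B : Matrix (Fin d) (Fin 2) ℝ, A = B * Bᵀ := by
  have hA := hpsd.isHermitian
  set lam := hA.eigenvalues with hlam
  set U : Matrix (Fin d) (Fin d) ℝ := (hA.eigenvectorUnitary : Matrix (Fin d) (Fin d) ℝ)
    with hU
  have hlamnn : ∀ j, 0 ≤ lam j := fun j => hpsd.eigenvalues_nonneg j
  have hcard : Fintype.card {j // lam j ≠ 0} ≤ 2 := by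
    rw [← hA.rank_eq_card_non_zero_eigs]; exact hrank
  set m := Fintype.card {j // lam j ≠ 0} with hm
  set e : {j // lam j ≠ 0} ≃ Fin m := Fintype.equivFin _ with he
  have key : ∀ i i', A i i' = ∑ j : {j // lam j ≠ 0}, lam j.1 * (U i j.1 * U i' j.1) := by
    intro i i'
    have hspec := hA.spectral_theorem
    have h1 : A i i' = ∑ j, lam j * (U i j * U i' j) := by
      conv_lhs => rw [hspec, Unitary.conjStarAlgAut_apply]
      rw [Matrix.mul_apply]
      congr 1; ext j
      rw [Matrix.mul_diagonal]
      simp [Matrix.star_eq_conjTranspose, Matrix.conjTranspose_apply, hU]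
      ring
    rw [h1]
    rw [← Finset.sum_filter_of_ne (p := fun j => lam j ≠ 0)
      (fun j _ hne => by intro h0; apply hne; rw [h0]; ring)]
    exact Finset.sum_subtype _ (by simp) _
  -- define B
  set f : Fin d → ℕ → ℝ := fun i n =>
    if h : n < m then Real.sqrt (lam (e.symm ⟨n, h⟩).1) * U i (e.symm ⟨n, h⟩).1 else 0
    with hf
  refine ⟨Matrix.of fun i c => f i c, ?_⟩
  ext i i'
  rw [key]
  calc ∑ j : {j // lam j ≠ 0}, lam j.1 * (U i j.1 * U i' j.1)
      = ∑ c : Fin m, lam (e.symm c).1 * (U i (e.symm c).1 * U i' (e.symm c).1) :=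
        (Equiv.sum_comp e.symm _).symm
    _ = ∑ c : Fin m, f i c * f i' c := by
        apply Finset.sum_congr rfl
        intro c _
        rw [hf]
        simp only [c.isLt, dif_pos, Fin.eta]
        conv_lhs => rw [← Real.mul_self_sqrt (hlamnn (e.symm c).1)]
        ring
    _ = ∑ n ∈ Finset.range m, f i n * f i' n := by
        rw [Finset.sum_range fun n => f i n * f i' n]
    _ = ∑ n ∈ Finset.range 2, f i n * f i' n := by
        apply Finset.sum_subset (Finset.range_subset_range.mpr hcard)
        intro n _ hn
        rw [Finset.mem_range] at hn
        push_neg at hn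
        rw [hf]
        simp [Nat.not_lt.mpr hn]
    _ = ∑ c : Fin 2, f i c * f i' c :=
        (Finset.sum_range (n := 2) fun n => f i n * f i' n).symm
    _ = ((Matrix.of fun i (c : Fin 2) => f i (c : ℕ))
          * (Matrix.of fun i (c : Fin 2) => f i (c : ℕ))ᵀ) i i' := by
        rw [Matrix.mul_apply]
        simp [Matrix.transpose_apply]

lemma mul_conj_polar (a b : ℂ) : a * (starRingEnd ℂ) b
    = ((‖a‖ * ‖b‖ : ℝ) : ℂ)
      * Complex.exp ((↑(Complex.arg a - Complex.arg b)) * Complex.I) := by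
  conv_lhs => rw [← Complex.norm_mul_exp_arg_mul_I a, ← Complex.norm_mul_exp_arg_mul_I b]
  rw [_root_.map_mul, ← Complex.exp_conj]
  simp only [_root_.map_mul, Complex.conj_ofReal, Complex.conj_I]
  rw [mul_mul_mul_comm, ← Complex.exp_add]
  push_cast
  ring_nf

open Complex in
lemma rotate_to_quadrant {ι : Type*} [Fintype ι] (z : ι → ℂ)
    (h : ∀ i j, 0 ≤ (z i * (starRingEnd ℂ) (z j)).re) :
    ∃ w : ℂ, ‖w‖ = 1 ∧ ∀ i, 0 ≤ (w * z i).re ∧ 0 ≤ (w * z i).im := by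
  by_cases hz : ∀ i, z i = 0
  · exact ⟨1, by simp, fun i => by simp [hz i]⟩
  push_neg at hz
  obtain ⟨k, hk⟩ := hz
  set w₁ : ℂ := (starRingEnd ℂ) (z k) / (‖z k‖ : ℂ) with hw₁
  have habsk : (0:ℝ) < ‖z k‖ := norm_pos_iff.mpr hk
  have hw₁abs : ‖w₁‖ = 1 := by
    simp [hw₁, _root_.map_div₀, habsk.ne']
  set y : ι → ℂ := fun i => w₁ * z i with hy
  have hpair : ∀ i j, 0 ≤ (y i * (starRingEnd ℂ) (y j)).re := by
    intro i j
    have e : y i * (starRingEnd ℂ) (y j)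
        = (w₁ * (starRingEnd ℂ) w₁) * (z i * (starRingEnd ℂ) (z j)) := by
      simp only [hy, _root_.map_mul]; ring
    rw [e, Complex.mul_conj, ← Complex.sq_norm, hw₁abs]
    simpa using h i j
  have hyne : ∀ i, z i ≠ 0 → y i ≠ 0 := by
    intro i hi
    simp [hy, hw₁, div_eq_zero_iff, habsk.ne', hi, hk]
  have hyre : ∀ i, 0 ≤ (y i).re := by
    intro i
    have hyk : y k = (‖z k‖ : ℂ) := by
      rw [hy]
      simp only [hw₁, div_mul_eq_mul_div, mul_comm ((starRingEnd ℂ) (z k)) (z k),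
        Complex.mul_conj, ← Complex.sq_norm]
      rw [sq]
      push_cast
      rw [mul_div_assoc, div_self (Complex.ofReal_ne_zero.mpr habsk.ne'), mul_one]
    have h2 := hpair i k
    rw [hyk] at h2
    have h3 : 0 ≤ (y i).re * ‖z k‖ := by
      simpa [Complex.mul_re] using h2
    rw [mul_comm] at h3
    exact nonneg_of_mul_nonneg_right h3 habsk
  have harg : ∀ i, z i ≠ 0 → |Complex.arg (y i)| ≤ Real.pi / 2 := fun i _ =>
    Complex.abs_arg_le_pi_div_two_iff.mpr (hyre i)
  set S : Finset ι := Finset.univ.filter (fun i => z i ≠ 0) with hS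
  have hSne : S.Nonempty := ⟨k, by simp [hS, hk]⟩
  obtain ⟨j₀, hj₀S, hj₀min⟩ := S.exists_min_image (fun i => Complex.arg (y i)) hSne
  have hj₀ne : z j₀ ≠ 0 := by simpa [hS] using hj₀S
  set α := Complex.arg (y j₀) with hα
  have hdelta : ∀ i ∈ S, Complex.arg (y i) - α ∈ Set.Icc 0 (Real.pi / 2) := by
    intro i hiS
    have hine : z i ≠ 0 := by simpa [hS] using hiS
    constructor
    · simpa using sub_nonneg.mpr (hj₀min i hiS)
    · have hre : 0 ≤ ‖y i‖ * ‖y j₀‖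
          * Real.cos (Complex.arg (y i) - α) := by
        have h2 := hpair i j₀
        rw [mul_conj_polar] at h2
        simpa only [Complex.mul_re, Complex.ofReal_re, Complex.ofReal_im,
          Complex.exp_ofReal_mul_I_re, Complex.exp_ofReal_mul_I_im, zero_mul, sub_zero, hα]
          using h2
      have hpos : 0 < ‖y i‖ * ‖y j₀‖ := by
        have h1 := norm_pos_iff.mpr (hyne i hine)
        have h2 := norm_pos_iff.mpr (hyne j₀ hj₀ne)
        positivity
      have hcos : 0 ≤ Real.cos (Complex.arg (y i) - α) :=
        nonneg_of_mul_nonneg_right hre hpos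
      by_contra hgt
      push_neg at hgt
      have hle : Complex.arg (y i) - α ≤ Real.pi := by
        have h1 := abs_le.mp (harg i hine)
        have h2 := abs_le.mp (harg j₀ hj₀ne)
        rw [hα]
        linarith [h1.2, h2.1]
      have : Real.cos (Complex.arg (y i) - α) < 0 :=
        Real.cos_neg_of_pi_div_two_lt_of_lt hgt (by linarith [Real.pi_pos])
      linarith
  refine ⟨Complex.exp ((-α : ℝ) * Complex.I) * w₁, ?_, ?_⟩
  · simp [_root_.map_mul, hw₁abs, Complex.norm_exp]
  · intro i
    by_cases hi : z i = 0
    · simp [hi]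
    have hiS : i ∈ S := by simp [hS, hi]
    have key : Complex.exp ((-α : ℝ) * Complex.I) * w₁ * z i
        = ((‖y i‖ : ℝ) : ℂ)
          * Complex.exp ((↑(Complex.arg (y i) - α)) * Complex.I) := by
      rw [mul_assoc]
      have : w₁ * z i = y i := rfl
      rw [this]
      conv_lhs => rw [← Complex.norm_mul_exp_arg_mul_I (y i)]
      rw [mul_comm (Complex.exp _) _, mul_assoc, ← Complex.exp_add]
      push_cast
      ring_nf
    obtain ⟨hd0, hd1⟩ := hdelta i hiS
    constructor
    · rw [key]
      simp only [Complex.mul_re, Complex.ofReal_re, Complex.ofReal_im,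
        Complex.exp_ofReal_mul_I_re, Complex.exp_ofReal_mul_I_im, zero_mul, sub_zero]
      exact mul_nonneg (norm_nonneg _)
        (Real.cos_nonneg_of_mem_Icc ⟨by linarith, hd1⟩)
    · rw [key]
      simp only [Complex.mul_im, Complex.ofReal_re, Complex.ofReal_im,
        Complex.exp_ofReal_mul_I_re, Complex.exp_ofReal_mul_I_im, zero_mul, add_zero]
      exact mul_nonneg (norm_nonneg _)
        (Real.sin_nonneg_of_nonneg_of_le_pi hd0 (by linarith [Real.pi_pos]))

theorem dnn_rank_le_two_is_cp {d : ℕ} (A : Matrix (Fin d) (Fin d) ℝ)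
    (hpsd : A.PosSemidef) (hnonneg : ∀ i j, 0 ≤ A i j)
    (hrank : A.rank ≤ 2) :
    IsCompletelyPositive A := by
  obtain ⟨B, hB⟩ := exists_factor_two A hpsd hrank
  set z : Fin d → ℂ := fun i => ⟨B i 0, B i 1⟩ with hz
  have hentry : ∀ i j, (z i * (starRingEnd ℂ) (z j)).re = A i j := by
    intro i j
    rw [hB, Matrix.mul_apply, Fin.sum_univ_two]
    simp [hz, Complex.mul_re, Matrix.transpose_apply]
  have hpair : ∀ i j, 0 ≤ (z i * (starRingEnd ℂ) (z j)).re := by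
    intro i j; rw [hentry]; exact hnonneg i j
  obtain ⟨w, hwabs, hw⟩ := rotate_to_quadrant z hpair
  refine ⟨2, by norm_num, Matrix.of fun i c => ![(w * z i).re, (w * z i).im] c, ?_, ?_⟩
  · intro i c
    fin_cases c
    · exact (hw i).1
    · exact (hw i).2
  · ext i j
    rw [Matrix.mul_apply, Fin.sum_univ_two]
    simp only [Matrix.of_apply, Matrix.transpose_apply, Matrix.cons_val_zero,
      Matrix.cons_val_one, Matrix.head_cons]
    have h1 : (w * z i).re * (w * z j).re + (w * z i).im * (w * z j).im
        = ((w * z i) * (starRingEnd ℂ) (w * z j)).re := by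
      simp [Complex.mul_re, Complex.conj_re, Complex.conj_im]; ring
    have h2 : (w * z i) * (starRingEnd ℂ) (w * z j)
        = (w * (starRingEnd ℂ) w) * (z i * (starRingEnd ℂ) (z j)) := by
      rw [_root_.map_mul]; ring
    rw [h1, h2, Complex.mul_conj, ← Complex.sq_norm, hwabs]
    simp [hentry i j]
end

section
/- The Horn matrix H, the 5×5 symmetric matrix with H_{ii}=1 and off-diagonal pattern H = [[1,−1,1,1,−1],[−1,1,−1,1,1],[1,−1,1,−1,1],[1,1,−1,1,−1],[−1,1,1,−1,1]], is copositive: xᵀHx ≥ 0 for every vector x ∈ ℝ⁵ with nonnegative entries. -/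
open Matrix

/-- The Horn matrix. -/
def hornMatrix : Matrix (Fin 5) (Fin 5) ℝ :=
  !![1, -1, 1, 1, -1;
     -1, 1, -1, 1, 1;
     1, -1, 1, -1, 1;
     1, 1, -1, 1, -1;
     -1, 1, 1, -1, 1]

theorem hornMatrix_copositive (x : Fin 5 → ℝ) (hx : ∀ i, 0 ≤ x i) :
    0 ≤ x ⬝ᵥ hornMatrix.mulVec x := by
  have h0 := hx 0; have h1 := hx 1; have h2 := hx 2; have h3 := hx 3; have h4 := hx 4
  norm_num [hornMatrix, dotProduct, mulVec, Fin.sum_univ_five, Matrix.cons_val_zero,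
    Matrix.cons_val_one, Matrix.head_cons, Matrix.vecHead, Matrix.vecTail, Function.comp]
  simp only [Matrix.cons_val, Fin.succ_zero_eq_one, Fin.succ_one_eq_two] at *
  norm_num
  rcases le_total (x 3) (x 4) with h | h
  · nlinarith [sq_nonneg (x 0 - x 1 + x 2 + x 3 - x 4), mul_nonneg h1 h3,
      mul_nonneg h2 (sub_nonneg.2 h)]
  · nlinarith [sq_nonneg (x 2 - x 1 + x 0 + x 4 - x 3), mul_nonneg h1 h4,
      mul_nonneg h0 (sub_nonneg.2 h)]
end

section
/- Let x ∈ ℝ^d with all x_i ≥ 0 and ‖x‖₁ > 0, and let e_x(φ) = Σ_j √(x_j/‖x‖₁) e^{iφ_j}|j⟩. Then (1/(2π)^d) ∫_{[0,2π]^d} (|e_x(φ)⟩⟨e_x(φ)|)^{⊗2} dφ = (1/‖x‖₁²)[ Σ_i x_i² |ii⟩⟨ii| + Σ_{i<j} 2 x_i x_j |D_{ij}⟩⟨D_{ij}| ], where |D_{ij}⟩ = (|ij⟩+|ji⟩)/√2. In particular this operator is a separable quantum state. -/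
open MeasureTheory Real

lemma key_int (n : ℤ) :
    ∫ φ in Set.Icc (0:ℝ) (2*π), Complex.exp (Complex.I * n * φ) =
      if n = 0 then ((2*π : ℝ) : ℂ) else 0 := by
  rw [MeasureTheory.integral_Icc_eq_integral_Ioc,
    ← intervalIntegral.integral_of_le (by positivity)]
  by_cases hn : n = 0
  · simp [hn]
  · rw [if_neg hn]
    have hc : (Complex.I * n) ≠ 0 := by
      simp [Complex.ext_iff, hn, Complex.I_ne_zero]
    rw [integral_exp_mul_complex hc]
    have h1 : Complex.exp (Complex.I * n * (2*π : ℝ)) = 1 := by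
      rw [show Complex.I * n * ((2*π : ℝ) : ℂ) = n * (2 * π * Complex.I) by push_cast; ring]
      exact Complex.exp_int_mul_two_pi_mul_I n
    push_cast at h1
    simp [h1]

lemma hiff_lemma {d : ℕ} (i j k l : Fin d) :
    (∀ m : Fin d, ((if m = i then (1:ℤ) else 0) + (if m = j then 1 else 0)
      - (if m = k then 1 else 0) - (if m = l then 1 else 0)) = 0)
    ↔ ((i = k ∧ j = l) ∨ (i = l ∧ j = k)) := by
  constructor
  · intro h
    have hi := h i; have hj := h j; have hk := h k; have hl := h l
    by_cases hik : i = k <;> by_cases hil : i = l <;> by_cases hjk : j = k <;>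
      by_cases hjl : j = l <;> by_cases hij : i = j <;> by_cases hkl : k = l <;>
      simp_all
  · rintro (⟨rfl, rfl⟩ | ⟨rfl, rfl⟩) m <;> split_ifs <;> omega


/-- Entrywise identity for
`(1/(2π)^d) ∫_{[0,2π]^d} (|e_x(φ)⟩⟨e_x(φ)|)^{⊗2} dφ`, where
`e_x(φ) = Σ_j √(x_j/‖x‖₁) e^{𝕚φ_j}|j⟩`: the entry at `((i,j),(k,l))` of the
integrand is `√(x_i/L)√(x_j/L)√(x_k/L)√(x_l/L) · exp(𝕚(φ_i+φ_j−φ_k−φ_l))` with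
`L = ‖x‖₁ = Σ_i x_i`, and the resulting operator equals
`(1/L²)[Σ_i x_i²|ii⟩⟨ii| + Σ_{i<j} 2 x_i x_j |D_ij⟩⟨D_ij|]`, whose entry at
`((i,j),(k,l))` is `(x_i x_j / L²)(δ_{ik}δ_{jl} + δ_{il}δ_{jk} − δ_{i,j,k,l})`.
In particular this operator is a separable quantum state, being a uniform
mixture of the product states `|e_x(φ)⟩⟨e_x(φ)|^{⊗2}`. -/
theorem integral_Ix_tensor_square {d : ℕ} (hd : 1 ≤ d) (x : Fin d → ℝ)
    (hx : ∀ i, 0 ≤ x i) (hx1 : 0 < ∑ i, x i) (i j k l : Fin d) :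
    (1 / (2 * π) ^ d : ℂ) *
      ∫ φ in Set.univ.pi (fun _ : Fin d => Set.Icc (0 : ℝ) (2 * π)),
        ((Real.sqrt (x i / ∑ m, x m) * Real.sqrt (x j / ∑ m, x m) *
          Real.sqrt (x k / ∑ m, x m) * Real.sqrt (x l / ∑ m, x m) : ℝ) : ℂ) *
        Complex.exp (Complex.I *
          ((φ i : ℂ) + (φ j : ℂ) - (φ k : ℂ) - (φ l : ℂ))) =
    ((x i * x j / (∑ m, x m) ^ 2 : ℝ) : ℂ) *
      ((if i = k ∧ j = l then 1 else 0) + (if i = l ∧ j = k then 1 else 0)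
        - (if i = j ∧ j = k ∧ k = l then 1 else 0) : ℂ) := by
  classical
  set L : ℝ := ∑ m, x m with hL
  set C : ℝ := Real.sqrt (x i / L) * Real.sqrt (x j / L) *
      Real.sqrt (x k / L) * Real.sqrt (x l / L) with hC
  set c : Fin d → ℤ := fun m => (if m = i then 1 else 0) + (if m = j then 1 else 0)
      - (if m = k then 1 else 0) - (if m = l then 1 else 0) with hcdef
  have hexp : ∀ φ : Fin d → ℝ,
      Complex.exp (Complex.I * ((φ i : ℂ) + (φ j : ℂ) - (φ k : ℂ) - (φ l : ℂ)))
        = ∏ m, Complex.exp (Complex.I * (c m : ℂ) * (φ m : ℂ)) := by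
    intro φ
    rw [← Complex.exp_sum]
    congr 1
    have h1 : ∀ m : Fin d, (Complex.I * (c m : ℂ) * (φ m : ℂ))
        = Complex.I * ((c m : ℂ) * (φ m : ℂ)) := fun m => by ring
    simp_rw [h1, ← Finset.mul_sum]
    congr 1
    simp only [hcdef]
    push_cast
    simp [add_mul, sub_mul, ite_mul, Finset.sum_add_distrib, Finset.sum_sub_distrib,
      Finset.sum_ite_eq']
  have hmeas : MeasurableSet (Set.univ.pi fun _ : Fin d => Set.Icc (0:ℝ) (2*π)) :=
    MeasurableSet.univ_pi (fun _ => measurableSet_Icc)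
  have hindprod : ∀ φ : Fin d → ℝ,
      (Set.univ.pi fun _ : Fin d => Set.Icc (0:ℝ) (2*π)).indicator
        (fun φ => ∏ m, Complex.exp (Complex.I * (c m : ℂ) * (φ m : ℂ))) φ
      = ∏ m, (Set.Icc (0:ℝ) (2*π)).indicator
          (fun t => Complex.exp (Complex.I * (c m : ℂ) * (t : ℂ))) (φ m) := by
    intro φ
    by_cases h : φ ∈ Set.univ.pi fun _ : Fin d => Set.Icc (0:ℝ) (2*π)
    · rw [Set.indicator_of_mem h]
      refine Finset.prod_congr rfl fun m _ => ?_
      rw [Set.indicator_of_mem (h m (Set.mem_univ m))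
        (f := fun t => Complex.exp (Complex.I * (c m : ℂ) * (t : ℂ)))]
    · rw [Set.indicator_of_notMem h]
      simp only [Set.mem_pi, Set.mem_univ, forall_true_left] at h
      push_neg at h
      obtain ⟨m, hm⟩ := h
      symm
      exact Finset.prod_eq_zero (Finset.mem_univ m) (Set.indicator_of_notMem hm _)
  have hint : ∫ φ in (Set.univ.pi fun _ : Fin d => Set.Icc (0:ℝ) (2*π)),
      ((C : ℂ)) * Complex.exp (Complex.I * ((φ i : ℂ) + (φ j : ℂ) - (φ k : ℂ) - (φ l : ℂ)))
      = (C : ℂ) * ∏ m, (if c m = 0 then ((2*π : ℝ) : ℂ) else 0) := by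
    rw [MeasureTheory.integral_const_mul]
    congr 1
    simp_rw [hexp]
    rw [← MeasureTheory.integral_indicator hmeas]
    simp_rw [hindprod]
    rw [MeasureTheory.integral_fintype_prod_volume_eq_prod (ι := Fin d)
      (fun m t => (Set.Icc (0:ℝ) (2*π)).indicator
        (fun s => Complex.exp (Complex.I * (c m : ℂ) * (s : ℂ))) t)]
    exact Finset.prod_congr rfl fun m _ => by
      rw [MeasureTheory.integral_indicator measurableSet_Icc, key_int]
  rw [hint]
  have hiff : (∀ m, c m = 0) ↔ ((i = k ∧ j = l) ∨ (i = l ∧ j = k)) := hiff_lemma i j k l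
  have h2pi : ((2*π : ℝ) : ℂ) ^ d ≠ 0 := by
    apply pow_ne_zero
    simpa using Real.two_pi_pos.ne'
  by_cases hP : ∀ m, c m = 0
  · have hprod : (∏ m : Fin d, (if c m = 0 then ((2*π : ℝ) : ℂ) else 0))
        = ((2*π : ℝ) : ℂ) ^ d := by
      rw [Finset.prod_congr rfl (fun m _ => if_pos (hP m)), Finset.prod_const,
        Finset.card_univ, Fintype.card_fin]
    have hdelta : ((if i = k ∧ j = l then 1 else 0) + (if i = l ∧ j = k then 1 else 0)
        - (if i = j ∧ j = k ∧ k = l then 1 else 0) : ℂ) = 1 := by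
      rcases hiff.1 hP with ⟨rfl, rfl⟩ | ⟨rfl, rfl⟩
      · by_cases hij : i = j
        · subst hij; simp
        · simp [hij, Ne.symm hij]
      · by_cases hij : i = j
        · subst hij; simp
        · simp [hij, Ne.symm hij]
    have hi' : (0:ℝ) ≤ x i / L := div_nonneg (hx i) hx1.le
    have hj' : (0:ℝ) ≤ x j / L := div_nonneg (hx j) hx1.le
    have hCval : C = x i * x j / L ^ 2 := by
      rcases hiff.1 hP with ⟨rfl, rfl⟩ | ⟨rfl, rfl⟩
      · rw [hC, show Real.sqrt (x i / L) * Real.sqrt (x j / L) * Real.sqrt (x i / L) *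
            Real.sqrt (x j / L) = (Real.sqrt (x i / L) * Real.sqrt (x i / L)) *
            (Real.sqrt (x j / L) * Real.sqrt (x j / L)) from by ring,
          Real.mul_self_sqrt hi', Real.mul_self_sqrt hj']
        field_simp
      · rw [hC, show Real.sqrt (x i / L) * Real.sqrt (x j / L) * Real.sqrt (x j / L) *
            Real.sqrt (x i / L) = (Real.sqrt (x i / L) * Real.sqrt (x i / L)) *
            (Real.sqrt (x j / L) * Real.sqrt (x j / L)) from by ring,
          Real.mul_self_sqrt hi', Real.mul_self_sqrt hj']
        field_simp
    rw [hprod, hdelta, hCval]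
    have hpi2 : ((2:ℂ) * (π : ℂ)) ^ d ≠ 0 := by
      rw [show ((2:ℂ) * (π : ℂ)) ^ d = ((2*π : ℝ) : ℂ) ^ d from by push_cast; ring]
      exact h2pi
    have hLC : ((L : ℝ) : ℂ) ≠ 0 := Complex.ofReal_ne_zero.mpr hx1.ne'
    push_cast
    field_simp
  · have hprod : (∏ m : Fin d, (if c m = 0 then ((2*π : ℝ) : ℂ) else 0)) = 0 := by
      push_neg at hP
      obtain ⟨m, hm⟩ := hP
      exact Finset.prod_eq_zero (Finset.mem_univ m) (if_neg hm)
    have hQ : ¬((i = k ∧ j = l) ∨ (i = l ∧ j = k)) := fun hq => hP (hiff.2 hq)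
    have hA : ¬(i = k ∧ j = l) := fun h => hQ (Or.inl h)
    have hB : ¬(i = l ∧ j = k) := fun h => hQ (Or.inr h)
    have h3 : ¬(i = j ∧ j = k ∧ k = l) := by
      rintro ⟨rfl, rfl, rfl⟩
      exact hA ⟨rfl, rfl⟩
    rw [hprod, mul_zero, mul_zero]
    simp [hA, hB, h3]
end

section
/- Let K ≥ 1, Z > 0, α, β the roots of t²−(2+Z)t+1 = 0 with α > β, and f_m = ((α−1)α^m − (β−1)β^m)/(α−β). Set λ_k = f_{K−k} for 0 ≤ k ≤ 2K+1. Then Σ_{k=0}^{2K+1} C(2K+1, k) λ_k = 2(4+Z)^K, where C(n,k) is the binomial coefficient. -/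
theorem trace_of_rho (K : ℕ) (hK : 1 ≤ K) (Z : ℝ) (hZ : 0 < Z) (α β : ℝ)
    (hα : α = (2 + Z + Real.sqrt (Z * (4 + Z))) / 2)
    (hβ : β = (2 + Z - Real.sqrt (Z * (4 + Z))) / 2)
    (f : ℤ → ℝ)
    (hf : ∀ m : ℤ, f m = ((α - 1) * α ^ m - (β - 1) * β ^ m) / (α - β)) :
    ∑ k ∈ Finset.range (2 * K + 2),
      (Nat.choose (2 * K + 1) k : ℝ) * f ((K : ℤ) - (k : ℤ)) = 2 * (4 + Z) ^ K := by
  set s := Real.sqrt (Z * (4 + Z)) with hsdef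
  have hs2 : s ^ 2 = Z * (4 + Z) := Real.sq_sqrt (by positivity)
  have hspos : 0 < s := Real.sqrt_pos.mpr (by positivity)
  have hαβ : α * β = 1 := by rw [hα, hβ]; nlinarith [hs2]
  have hdiff : α - β = s := by rw [hα, hβ]; ring
  have hαpos : 0 < α := by rw [hα]; positivity
  have hβpos : 0 < β := by
    by_contra h
    push_neg at h
    nlinarith
  have hα0 : α ≠ 0 := ne_of_gt hαpos
  have hβ0 : β ≠ 0 := ne_of_gt hβpos
  have hne : α - β ≠ 0 := by rw [hdiff]; exact ne_of_gt hspos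
  have hβinv : β = α⁻¹ := by field_simp; linarith [hαβ]
  have hαinv : α = β⁻¹ := by field_simp; nlinarith [hαβ]
  have hqβ : (1 + β) ^ 2 = (4 + Z) * β := by rw [hβ]; nlinarith [hs2]
  have hqα : (1 + α) ^ 2 = (4 + Z) * α := by rw [hα]; nlinarith [hs2]
  have key : ∀ k ∈ Finset.range (2 * K + 2),
      (Nat.choose (2 * K + 1) k : ℝ) * f ((K : ℤ) - (k : ℤ))
      = (α - 1) * α ^ K / (α - β) * ((Nat.choose (2 * K + 1) k : ℝ) * β ^ k)
        - (β - 1) * β ^ K / (α - β) * ((Nat.choose (2 * K + 1) k : ℝ) * α ^ k) := by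
    intro k _
    rw [hf]
    have e1 : α ^ ((K : ℤ) - (k : ℤ)) = α ^ K * β ^ k := by
      rw [zpow_sub₀ hα0, zpow_natCast, zpow_natCast, hβinv, inv_pow, div_eq_mul_inv]
    have e2 : β ^ ((K : ℤ) - (k : ℤ)) = β ^ K * α ^ k := by
      rw [zpow_sub₀ hβ0, zpow_natCast, zpow_natCast, hαinv, inv_pow, div_eq_mul_inv]
    rw [e1, e2]
    field_simp
  rw [Finset.sum_congr rfl key, Finset.sum_sub_distrib, ← Finset.mul_sum, ← Finset.mul_sum]
  have hsum : ∀ x : ℝ, ∑ k ∈ Finset.range (2 * K + 2),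
      (Nat.choose (2 * K + 1) k : ℝ) * x ^ k = (x + 1) ^ (2 * K + 1) := by
    intro x
    rw [add_pow]
    exact Finset.sum_congr rfl fun k _ => by rw [one_pow]; ring
  rw [hsum, hsum]
  have hb : (β + 1) ^ (2 * K + 1) = ((4 + Z) * β) ^ K * (β + 1) := by
    rw [pow_succ, pow_mul]
    congr 1
    rw [show (β + 1) ^ 2 = (4 + Z) * β by linarith [hqβ, sq_nonneg (1+β)]]
  have ha : (α + 1) ^ (2 * K + 1) = ((4 + Z) * α) ^ K * (α + 1) := by
    rw [pow_succ, pow_mul]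
    congr 1
    rw [show (α + 1) ^ 2 = (4 + Z) * α by nlinarith [hqα]]
  rw [hb, ha, mul_pow, mul_pow]
  have hab : α ^ K * β ^ K = 1 := by rw [← mul_pow, hαβ, one_pow]
  field_simp
  linear_combination (2 * (α - β)) * hab
end

section
/- Fix Z > 0, let f_m be defined by f_0 = 1, f_1 = 1+Z, f_{m+2} = (2+Z)f_{m+1} − f_m, and let p, q ≥ 0 be integers. Then the (q+1)×(q+1) Hankel matrix B with entries B_{a,b} = f_{p+a+b} (0 ≤ a,b ≤ q) is positive semidefinite of rank at most 2, admitting the Gram decomposition B_{a,b} = (1/f_p)(f_{p+a} f_{p+b} + √(I_{a,a})·√(I_{b,b})), where I_{a,a} = f_p f_{p+2a} − f_{p+a}² ≥ 0. -/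
open Matrix

/-- Chebyshev-like auxiliary sequence: `cheb Z n = (α^n - β^n)/(α-β)` for the
roots `α, β` of `t^2 - (2+Z) t + 1`. -/
def cheb (Z : ℝ) : ℕ → ℝ
  | 0 => 0
  | 1 => 1
  | (n + 2) => (2 + Z) * cheb Z (n + 1) - cheb Z n

lemma cheb_zero (Z : ℝ) : cheb Z 0 = 0 := rfl
lemma cheb_one (Z : ℝ) : cheb Z 1 = 1 := rfl
lemma cheb_add_two (Z : ℝ) (n : ℕ) :
    cheb Z (n + 2) = (2 + Z) * cheb Z (n + 1) - cheb Z n := rfl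

lemma cheb_nonneg (Z : ℝ) (hZ : 0 < Z) : ∀ n, 0 ≤ cheb Z n ∧ cheb Z n ≤ cheb Z (n + 1) := by
  intro n
  induction n with
  | zero => rw [cheb_zero, cheb_one]; constructor <;> norm_num
  | succ n ih =>
    obtain ⟨h1, h2⟩ := ih
    have h3 : 0 ≤ cheb Z (n + 1) := le_trans h1 h2
    rw [cheb_add_two]
    constructor <;> nlinarith

theorem hankel_block_psd_rank_two (Z : ℝ) (hZ : 0 < Z) (f : ℕ → ℝ)
    (hf0 : f 0 = 1) (hf1 : f 1 = 1 + Z)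
    (hrec : ∀ m : ℕ, f (m + 2) = (2 + Z) * f (m + 1) - f m)
    (p q : ℕ) (B : Matrix (Fin (q + 1)) (Fin (q + 1)) ℝ)
    (hB : ∀ a b : Fin (q + 1), B a b = f (p + a + b)) :
    B.PosSemidef ∧ B.rank ≤ 2 ∧
    (∀ a : Fin (q + 1), 0 ≤ f p * f (p + 2 * a) - f (p + a) ^ 2) ∧
    (∀ a b : Fin (q + 1),
      B a b = (1 / f p) * (f (p + a) * f (p + b) +
        Real.sqrt (f p * f (p + 2 * a) - f (p + a) ^ 2) *
        Real.sqrt (f p * f (p + 2 * b) - f (p + b) ^ 2))) := by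
  -- positivity of f
  have hfposs : ∀ m, 0 < f m ∧ f m < f (m + 1) := by
    intro m
    induction m with
    | zero => rw [hf0, hf1]; constructor <;> linarith
    | succ n ih =>
      obtain ⟨h1, h2⟩ := ih
      have h3 := hrec n
      constructor
      · linarith
      · nlinarith
  have hfp : ∀ m, 0 < f m := fun m => (hfposs m).1
  -- constant Wronskian
  have hw : ∀ m, f m * f (m + 2) - f (m + 1) ^ 2 = Z := by
    intro m
    induction m with
    | zero => have h := hrec 0; rw [hf0, hf1] at *; nlinarith
    | succ n ih =>
      have h1 := hrec n
      have h2 : f (n + 3) = (2 + Z) * f (n + 2) - f (n + 1) := hrec (n + 1)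
      show f (n + 1) * f (n + 3) - f (n + 2) ^ 2 = Z
      linear_combination ih + f (n + 1) * h2 - f (n + 2) * h1
  -- key identity, case b = 1
  have key1 : ∀ a p', f p' * f (p' + a + 1) - f (p' + a) * f (p' + 1) = Z * cheb Z a := by
    have H : ∀ a, (∀ p', f p' * f (p' + a + 1) - f (p' + a) * f (p' + 1) = Z * cheb Z a) ∧
        (∀ p', f p' * f (p' + (a + 1) + 1) - f (p' + (a + 1)) * f (p' + 1)
          = Z * cheb Z (a + 1)) := by
      intro a
      induction a with
      | zero =>
        constructor
        · intro p'; rw [cheb_zero]; ring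
        · intro p'
          have := hw p'
          rw [cheb_one]
          show f p' * f (p' + 2) - f (p' + 1) * f (p' + 1) = Z * 1
          linear_combination this
      | succ n ih =>
        refine ⟨ih.2, fun p' => ?_⟩
        have h1 := ih.1 p'
        have h2 := ih.2 p'
        have hr1 := hrec (p' + n + 1)
        show f p' * f (p' + n + 3) - f (p' + n + 2) * f (p' + 1) = Z * cheb Z (n + 2)
        have hr1' : f (p' + n + 3) = (2 + Z) * f (p' + n + 2) - f (p' + n + 1) := hr1
        have hr2 : f (p' + n + 2) = (2 + Z) * f (p' + n + 1) - f (p' + n) := hrec (p' + n)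
        have h2' : f p' * f (p' + n + 2) - f (p' + n + 1) * f (p' + 1) = Z * cheb Z (n + 1) := h2
        have h1' : f p' * f (p' + n + 1) - f (p' + n) * f (p' + 1) = Z * cheb Z n := h1
        rw [cheb_add_two]
        linear_combination f p' * hr1' - f (p' + 1) * hr2 + (2 + Z) * h2' - h1'
    exact fun a p' => (H a).1 p'
  -- key identity
  have key : ∀ b a p', f p' * f (p' + a + b) - f (p' + a) * f (p' + b)
      = Z * cheb Z a * cheb Z b := by
    have H : ∀ b, (∀ a p', f p' * f (p' + a + b) - f (p' + a) * f (p' + b)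
          = Z * cheb Z a * cheb Z b) ∧
        (∀ a p', f p' * f (p' + a + (b + 1)) - f (p' + a) * f (p' + (b + 1))
          = Z * cheb Z a * cheb Z (b + 1)) := by
      intro b
      induction b with
      | zero =>
        constructor
        · intro a p'; rw [cheb_zero]; ring
        · intro a p'
          have := key1 a p'
          rw [cheb_one]
          show f p' * f (p' + a + 1) - f (p' + a) * f (p' + 1) = Z * cheb Z a * 1
          linarith
      | succ n ih =>
        refine ⟨ih.2, fun a p' => ?_⟩
        have h1 := ih.1 a p'
        have h2 := ih.2 a p'
        have hr1 := hrec (p' + a + n)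
        have hr2 := hrec (p' + n)
        show f p' * f (p' + a + n + 2) - f (p' + a) * f (p' + n + 2)
          = Z * cheb Z a * cheb Z (n + 2)
        have h2' : f p' * f (p' + a + n + 1) - f (p' + a) * f (p' + n + 1)
          = Z * cheb Z a * cheb Z (n + 1) := h2
        have h1' : f p' * f (p' + a + n) - f (p' + a) * f (p' + n)
          = Z * cheb Z a * cheb Z n := h1
        rw [cheb_add_two]
        linear_combination f p' * hr1 - f (p' + a) * hr2 + (2 + Z) * h2' - h1'
    exact fun b a p' => (H b).1 a p'
  -- the diagonal determinants
  have hIaa : ∀ a : ℕ, f p * f (p + 2 * a) - f (p + a) ^ 2 = Z * cheb Z a * cheb Z a := by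
    intro a
    have e : p + 2 * a = p + a + a := by ring
    rw [e, ← key a a p]; ring
  have hsqrt : ∀ a : ℕ, Real.sqrt (f p * f (p + 2 * a) - f (p + a) ^ 2)
      = Real.sqrt Z * cheb Z a := by
    intro a
    rw [hIaa a, mul_assoc, Real.sqrt_mul hZ.le,
      Real.sqrt_mul_self (cheb_nonneg Z hZ a).1]
  have hfpne : f p ≠ 0 := ne_of_gt (hfp p)
  -- Gram decomposition statement
  have hGram : ∀ a b : Fin (q + 1),
      B a b = (1 / f p) * (f (p + a) * f (p + b) +
        Real.sqrt (f p * f (p + 2 * a) - f (p + a) ^ 2) *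
        Real.sqrt (f p * f (p + 2 * b) - f (p + b) ^ 2)) := by
    intro a b
    rw [hB a b, hsqrt, hsqrt]
    have hk := key b a p
    have hZs : Real.sqrt Z * Real.sqrt Z = Z := Real.mul_self_sqrt hZ.le
    field_simp
    linear_combination hk - cheb Z ↑a * cheb Z ↑b * hZs
  -- the Gram matrix
  set s := Real.sqrt (f p) with hs
  have hss : s * s = f p := Real.mul_self_sqrt (hfp p).le
  have hsne : s ≠ 0 := by
    intro h
    rw [h] at hss
    simp at hss
    exact hfpne hss.symm
  set A : Matrix (Fin 2) (Fin (q + 1)) ℝ :=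
    Matrix.of (fun i a => (if i = 0 then f (p + a) else Real.sqrt Z * cheb Z a) / s) with hA
  have hBA : B = Aᴴ * A := by
    ext a b
    rw [Matrix.mul_apply, Fin.sum_univ_two, hB a b]
    simp only [hA, Matrix.conjTranspose_apply, Matrix.of_apply, star_trivial]
    norm_num
    have hk := key b a p
    have hZs : Real.sqrt Z * Real.sqrt Z = Z := Real.mul_self_sqrt hZ.le
    field_simp
    linear_combination hk - cheb Z ↑a * cheb Z ↑b * hZs + f (p + ↑a + ↑b) * hss
  refine ⟨?_, ?_, ?_, hGram⟩
  · rw [hBA]; exact Matrix.posSemidef_conjTranspose_mul_self A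
  · rw [hBA]
    calc (Aᴴ * A).rank ≤ A.rank := Matrix.rank_mul_le_right _ _
    _ ≤ Fintype.card (Fin 2) := Matrix.rank_le_card_height A
    _ = 2 := by simp
  · intro a
    rw [hIaa a]
    have h := (cheb_nonneg Z hZ a).1
    exact mul_nonneg (mul_nonneg hZ.le h) h
end
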